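/- There exist constants δ ∈ (0,1] and ε₀ > 0, independent of N and m, such that whenever 2 ≤ m ≤ N−2 and |ε| ≤ ε₀, there is exactly one collection (e_s, e(X)) with ‖e‖ ≤ δ satisfying F(e) = e. -/

import Mathlib

open Finset
open scoped symmDiff

/-- `M = {1,…,m}` viewed inside `ℤ/Nℤ`. -/
def Mset (N m : ℕ) : Finset (ZMod N) := (Finset.Icc 1 m).image (fun i : ℕ => (i : ZMod N))

/-- `∂Y`: the set of `j ∈ ℤ/Nℤ` such that exactly one of `j`, `j+1` lies in `Y`. -/
def pbdry (N : ℕ) [NeZero N] (Y : Finset (ZMod N)) : Finset (ZMod N) :=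
  Finset.univ.filter fun j => (j ∈ Y ∧ j + 1 ∉ Y) ∨ (j ∉ Y ∧ j + 1 ∈ Y)

/-- `n(X) = |∂(X Δ M)|`. -/
def nX (N m : ℕ) [NeZero N] (X : Finset (ZMod N)) : ℕ := (pbdry N (X ∆ Mset N m)).card

/-- The translate `Y + s = {i + s : i ∈ Y}`. -/
def tr (N : ℕ) (Y : Finset (ZMod N)) (s : ZMod N) : Finset (ZMod N) := Y.image (· + s)

/-- Extend a family of coefficients by setting `e(∅) := 1` and `e(M Δ (M+s)) := 0`
for `s ≠ 0`. -/
def pext (N m : ℕ) [NeZero N] (e : Finset (ZMod N) → ℝ) : Finset (ZMod N) → ℝ :=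
  fun X =>
    if X = ∅ then 1
    else if ∃ s : ZMod N, X = Mset N m ∆ tr N (Mset N m) s then 0
    else e X

/-- The sets `X` with `X:m` (i.e. `|X Δ M| = m`) and `n(X) > 2`. -/
def psector (N m : ℕ) [NeZero N] : Finset (Finset (ZMod N)) :=
  Finset.univ.filter fun X => (X ∆ Mset N m).card = m ∧ 2 < nX N m X

/-- The droplet fixed-point map `F(e_s, e(X)) = (e′_s, e′(X))`, where
`e′_s = 2ε·Σ_{j ∈ ∂(M−s)} e(M Δ (M−s) Δ {j,j+1})` and, for `X` with `X:m` and `n(X) > 2`,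
`e′(X) = −(ε/(n(X)−2))·Σ_{j ∈ ∂(X Δ M)} e(X Δ {j,j+1})
  + (1/(2(n(X)−2)))·Σ_{s} e_s·e((X+s) Δ (M+s) Δ M)`
(with the conventions `e(∅) = 1`, `e(M Δ (M+s)) = 0` for `s ≠ 0`);
all other components are set to `0`. -/
noncomputable def dropF (N m : ℕ) [NeZero N] (ε : ℝ)
    (p : (ZMod N → ℝ) × (Finset (ZMod N) → ℝ)) :
    (ZMod N → ℝ) × (Finset (ZMod N) → ℝ) :=
  (fun s => 2 * ε * ∑ j ∈ pbdry N (tr N (Mset N m) (-s)),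
      pext N m p.2 (Mset N m ∆ tr N (Mset N m) (-s) ∆ {j, j + 1}),
    fun X =>
      if (X ∆ Mset N m).card = m ∧ 2 < nX N m X then
        -(ε / ((nX N m X : ℝ) - 2)) *
            ∑ j ∈ pbdry N (X ∆ Mset N m), pext N m p.2 (X ∆ {j, j + 1})
          + (1 / (2 * ((nX N m X : ℝ) - 2))) *
              ∑ s : ZMod N, p.1 s * pext N m p.2 (tr N X s ∆ tr N (Mset N m) s ∆ Mset N m)
      else 0)

/-- The norm `‖e‖ = Σ_s |e_s| + 2·Σ_{X:m, n(X)>2} (n(X)−2)·|e(X)|`. -/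
def pnorm (N m : ℕ) [NeZero N] (p : (ZMod N → ℝ) × (Finset (ZMod N) → ℝ)) : ℝ :=
  ∑ s : ZMod N, |p.1 s|
    + 2 * ∑ X ∈ psector N m, ((nX N m X : ℝ) - 2) * |p.2 X|

section AuxDroplet
set_option maxHeartbeats 4000000
set_option linter.unusedSectionVars false

section Basic
variable {N m : ℕ} [NeZero N] (hm2 : 2 ≤ m) (hmN : m + 2 ≤ N)

lemma mem_tr {Y : Finset (ZMod N)} {s x : ZMod N} : x ∈ tr N Y s ↔ x - s ∈ Y := by
  constructor
  · rintro h; simp only [tr, mem_image] at h; rcases h with ⟨a, ha, rfl⟩; simpa using ha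
  · intro h; simp only [tr, mem_image]; exact ⟨x - s, h, by ring⟩

lemma tr_card (Y : Finset (ZMod N)) (s : ZMod N) : (tr N Y s).card = Y.card :=
  Finset.card_image_of_injective _ (add_left_injective s)

lemma tr_symmDiff (A B : Finset (ZMod N)) (s : ZMod N) :
    tr N (A ∆ B) s = tr N A s ∆ tr N B s :=
  Finset.image_symmDiff _ _ (add_left_injective s)

lemma tr_tr (Y : Finset (ZMod N)) (a b : ZMod N) : tr N (tr N Y a) b = tr N Y (a + b) := by
  ext x; simp only [mem_tr]; rw [sub_sub, add_comm b a]

lemma tr_zero (Y : Finset (ZMod N)) : tr N Y 0 = Y := by ext x; simp [mem_tr]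

lemma tr_inj {A B : Finset (ZMod N)} {s : ZMod N} (h : tr N A s = tr N B s) : A = B := by
  ext x; constructor <;> intro hx
  · have : x + s ∈ tr N A s := mem_tr.2 (by simpa using hx)
    rw [h] at this; simpa using mem_tr.1 this
  · have : x + s ∈ tr N B s := mem_tr.2 (by simpa using hx)
    rw [← h] at this; simpa using mem_tr.1 this

lemma mem_pbdry {Y : Finset (ZMod N)} {j : ZMod N} :
    j ∈ pbdry N Y ↔ (j ∈ Y ∧ j + 1 ∉ Y) ∨ (j ∉ Y ∧ j + 1 ∈ Y) := by
  simp [pbdry]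

lemma pbdry_tr (Y : Finset (ZMod N)) (s : ZMod N) :
    pbdry N (tr N Y s) = tr N (pbdry N Y) s := by
  ext j
  simp only [mem_pbdry, mem_tr, add_sub_right_comm]



include hmN in
lemma mem_Mset_val {x : ZMod N} : x ∈ Mset N m ↔ 1 ≤ x.val ∧ x.val ≤ m := by
  constructor
  · intro hx
    simp only [Mset, mem_image, mem_Icc] at hx
    rcases hx with ⟨i, ⟨h1, h2⟩, rfl⟩
    rw [ZMod.val_cast_of_lt (by omega)]
    exact ⟨h1, h2⟩
  · rintro ⟨h1, h2⟩
    simp only [Mset, mem_image, mem_Icc]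
    exact ⟨x.val, ⟨h1, h2⟩, ZMod.natCast_rightInverse x⟩

include hmN in
lemma card_Mset : (Mset N m).card = m := by
  have hinj : Set.InjOn (fun i : ℕ => (i : ZMod N)) (Finset.Icc 1 m) := by
    intro a ha b hb hab
    simp only [coe_Icc, Set.mem_Icc] at ha hb
    have : ((a : ZMod N)).val = ((b : ZMod N)).val := by simp only at hab; rw [hab]
    rwa [ZMod.val_cast_of_lt (by omega), ZMod.val_cast_of_lt (by omega)] at this
  rw [Mset, Finset.card_image_of_injOn hinj, Nat.card_Icc]
  omega

include hmN in
lemma val_cast_add_one {x : ZMod N} : x + 1 = (((x.val + 1 : ℕ)) : ZMod N) := by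
  push_cast
  rw [ZMod.natCast_rightInverse x]

include hm2 hmN in
lemma pbdry_Mset_subset : pbdry N (Mset N m) ⊆ {0, (m : ZMod N)} := by
  intro j hj
  rw [mem_pbdry] at hj
  have hj1 : j + 1 = (((j.val + 1 : ℕ)) : ZMod N) := val_cast_add_one hmN
  simp only [mem_insert, mem_singleton]
  rcases hj with ⟨h1, h2⟩ | ⟨h1, h2⟩
  · rw [mem_Mset_val hmN] at h1
    right
    have hvm : j.val = m := by
      by_contra hne
      apply h2
      rw [hj1, mem_Mset_val hmN, ZMod.val_cast_of_lt (by omega)]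
      omega
    rw [← hvm, ZMod.natCast_rightInverse j]
  · left
    rw [mem_Mset_val hmN] at h1
    rw [hj1, mem_Mset_val hmN] at h2
    have hlt : j.val + 1 < N := by
      rcases Nat.lt_or_ge (j.val + 1) N with h | h
      · exact h
      · exfalso
        have hv := ZMod.val_lt j
        have : j.val + 1 = N := by omega
        rw [this, ZMod.natCast_self, ZMod.val_zero] at h2
        omega
    rw [ZMod.val_cast_of_lt hlt] at h2
    have : j.val = 0 := by
      by_contra hne
      exact h1 ⟨by omega, by omega⟩
    exact (ZMod.val_eq_zero j).1 this

include hm2 hmN in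
lemma pbdry_Mset_card_le : (pbdry N (Mset N m)).card ≤ 2 := by
  calc (pbdry N (Mset N m)).card ≤ ({0, (m : ZMod N)} : Finset (ZMod N)).card :=
        card_le_card (pbdry_Mset_subset hm2 hmN)
    _ ≤ 2 := card_insert_le _ _ |>.trans (by simp)

include hmN in
lemma zone_ne_zero : (1 : ZMod N) ≠ 0 := by
  intro h
  have : (1 : ZMod N).val = 0 := by rw [h]; exact ZMod.val_zero
  have h1 : (1 : ZMod N).val = 1 := by
    have : Fact (1 < N) := Fact.mk (by omega)
    exact ZMod.val_one N
  omega

include hmN in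
lemma zsucc_ne_self (j : ZMod N) : j + 1 ≠ j := by
  intro h
  have : (1 : ZMod N) = 0 := by
    have := congrArg (fun x => x - j) h
    simpa [add_comm] using this
  exact zone_ne_zero hmN this

include hmN in
lemma card_pair' (j : ZMod N) : ({j, j+1} : Finset (ZMod N)).card = 2 := by
  rw [card_insert_of_notMem (by simp [(zsucc_ne_self hmN j).symm]), card_singleton]

-- toggle card: if exactly one of j, j+1 in A then |A ∆ {j,j+1}| = |A|
include hmN in
lemma toggle_card {A : Finset (ZMod N)} {j : ZMod N}
    (h : (j ∈ A ∧ j + 1 ∉ A) ∨ (j ∉ A ∧ j + 1 ∈ A)) :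
    (A ∆ {j, j+1}).card = A.card := by
  have hne := zsucc_ne_self hmN j
  rcases h with ⟨h1, h2⟩ | ⟨h1, h2⟩
  · have : A ∆ {j, j+1} = insert (j+1) (A.erase j) := by
      ext x
      by_cases hx1 : x = j <;> by_cases hx2 : x = j + 1 <;>
        simp [Finset.mem_symmDiff, hx1, hx2, h1, h2, hne, hne.symm]
    rw [this, card_insert_of_notMem (by simp [hne.symm, h2]), card_erase_of_mem h1]
    have : 1 ≤ A.card := card_pos.2 ⟨j, h1⟩
    omega
  · have : A ∆ {j, j+1} = insert j (A.erase (j+1)) := by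
      ext x
      by_cases hx1 : x = j <;> by_cases hx2 : x = j + 1 <;>
        simp [Finset.mem_symmDiff, hx1, hx2, h1, h2, hne, hne.symm]
    rw [this, card_insert_of_notMem (by simp [hne, h1]), card_erase_of_mem h2]
    have : 1 ≤ A.card := card_pos.2 ⟨j+1, h2⟩
    omega

-- toggling preserves the boundary-membership of j
lemma mem_pbdry_toggle {A : Finset (ZMod N)} {j : ZMod N} :
    j ∈ pbdry N (A ∆ {j, j+1}) ↔ j ∈ pbdry N A := by
  have hj : j ∈ ({j, j+1} : Finset (ZMod N)) := by simp
  have hj1 : j + 1 ∈ ({j, j+1} : Finset (ZMod N)) := by simp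
  simp only [mem_pbdry, Finset.mem_symmDiff, hj, hj1]
  tauto



end Basic


section Chunk2
variable {N m : ℕ} [NeZero N]

def fallSet (N : ℕ) [NeZero N] (Z : Finset (ZMod N)) : Finset (ZMod N) :=
  Z.filter (fun j => j + 1 ∉ Z)

def riseSet (N : ℕ) [NeZero N] (Z : Finset (ZMod N)) : Finset (ZMod N) :=
  (tr N Z (-1)).filter (fun j => j ∉ Z)

lemma mem_fallSet {Z : Finset (ZMod N)} {j : ZMod N} :
    j ∈ fallSet N Z ↔ j ∈ Z ∧ j + 1 ∉ Z := by simp [fallSet]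

lemma mem_riseSet {Z : Finset (ZMod N)} {j : ZMod N} :
    j ∈ riseSet N Z ↔ j ∉ Z ∧ j + 1 ∈ Z := by
  simp only [riseSet, mem_filter, mem_tr, sub_neg_eq_add]
  tauto

lemma fallSet_tr (Z : Finset (ZMod N)) (s : ZMod N) :
    fallSet N (tr N Z s) = tr N (fallSet N Z) s := by
  ext j
  simp only [mem_fallSet, mem_tr, add_sub_right_comm]

lemma pbdry_card_eq (Z : Finset (ZMod N)) :
    (pbdry N Z).card = (fallSet N Z).card + (riseSet N Z).card := by
  rw [← Finset.card_union_of_disjoint]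
  · congr 1
    ext j
    simp only [mem_pbdry, Finset.mem_union, mem_fallSet, mem_riseSet]
  · rw [Finset.disjoint_left]
    intro a ha hb
    rw [mem_fallSet] at ha; rw [mem_riseSet] at hb
    exact hb.1 ha.1

lemma fall_card_eq_rise_card (Z : Finset (ZMod N)) :
    (fallSet N Z).card = (riseSet N Z).card := by
  have h1 : (Z.filter (fun j => j + 1 ∈ Z)).card + (Z.filter (fun j => ¬ (j + 1 ∈ Z))).card = Z.card :=
    Finset.card_filter_add_card_filter_not _
  have h2 : ((tr N Z (-1)).filter (fun j => j ∈ Z)).card + ((tr N Z (-1)).filter (fun j => ¬ (j ∈ Z))).card = (tr N Z (-1)).card :=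
    Finset.card_filter_add_card_filter_not _
  have h3 : (tr N Z (-1)).filter (fun j => j ∈ Z) = Z.filter (fun j => j + 1 ∈ Z) := by
    ext j
    simp only [mem_filter, mem_tr, sub_neg_eq_add]
    tauto
  have h4 : (tr N Z (-1)).card = Z.card := tr_card Z (-1)
  rw [h3, h4] at h2
  have e1 : (fallSet N Z).card = (Z.filter (fun j => ¬ (j + 1 ∈ Z))).card := rfl
  have e2 : (riseSet N Z).card = ((tr N Z (-1)).filter (fun j => ¬ (j ∈ Z))).card := rfl
  omega

lemma mem_of_closed {Z : Finset (ZMod N)} (hcl : ∀ j ∈ Z, j + 1 ∈ Z) {a : ZMod N}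
    (ha : a ∈ Z) : ∀ k : ℕ, a + (k : ZMod N) ∈ Z := by
  intro k
  induction k with
  | zero => simpa using ha
  | succ n ih =>
      have := hcl _ ih
      push_cast
      rw [← add_assoc]
      push_cast at this
      exact this

lemma fallSet_nonempty {Z : Finset (ZMod N)} (hne : Z.Nonempty) (hcard : Z.card < N) :
    (fallSet N Z).Nonempty := by
  rw [Finset.nonempty_iff_ne_empty]
  intro hemp
  have hcl : ∀ j ∈ Z, j + 1 ∈ Z := by
    intro j hj
    by_contra hj1
    have : j ∈ fallSet N Z := mem_fallSet.2 ⟨hj, hj1⟩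
    rw [hemp] at this
    exact absurd this (Finset.notMem_empty j)
  obtain ⟨a, ha⟩ := hne
  have : ∀ b : ZMod N, b ∈ Z := by
    intro b
    have := mem_of_closed hcl ha (b - a).val
    rwa [ZMod.natCast_rightInverse (b - a), add_sub_cancel] at this
  have : Finset.univ ⊆ Z := fun b _ => this b
  have hN := Finset.card_le_card this
  rw [Finset.card_univ, ZMod.card] at hN
  omega

lemma fiber_card_le_fall (C Z : Finset (ZMod N)) (hne : Z.Nonempty) (hcard : Z.card < N) :
    (Finset.univ.filter (fun s : ZMod N => tr N C s = Z)).card ≤ (fallSet N Z).card := by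
  set S := Finset.univ.filter (fun s : ZMod N => tr N C s = Z) with hS
  rcases S.eq_empty_or_nonempty with h | ⟨s₀, hs₀⟩
  · simp [h]
  · obtain ⟨x₀, hx₀⟩ := fallSet_nonempty hne hcard
    have hs₀' : tr N C s₀ = Z := by simpa [hS] using hs₀
    apply Finset.card_le_card_of_injOn (fun s => x₀ + (s - s₀))
    · intro s hs
      have hs' : tr N C s = Z := by simpa [hS] using hs
      have htz : tr N Z (s - s₀) = Z := by
        conv_lhs => rw [← hs₀']
        rw [tr_tr, add_sub_cancel, hs']
      have : x₀ + (s - s₀) ∈ tr N (fallSet N Z) (s - s₀) := by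
        rw [mem_tr, add_sub_cancel_right]
        exact hx₀
      rwa [← fallSet_tr, htz] at this
    · intro s _ s' _ h
      simpa using h

lemma two_mul_fall_card (Z : Finset (ZMod N)) :
    2 * (fallSet N Z).card = (pbdry N Z).card := by
  rw [pbdry_card_eq, ← fall_card_eq_rise_card]
  ring

lemma eq_tr_Mset_of_pbdry_le (hm2 : 2 ≤ m) (hmN : m + 2 ≤ N) (Z : Finset (ZMod N))
    (hcard : Z.card = m) (hb : (pbdry N Z).card ≤ 2) :
    ∃ s, Z = tr N (Mset N m) s := by
  have hZne : Z.Nonempty := Finset.card_pos.1 (by omega)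
  have hZlt : Z.card < N := by omega
  have hfne := fallSet_nonempty hZne hZlt
  have hfr := fall_card_eq_rise_card Z
  have hpb := pbdry_card_eq Z
  have hf1 : (fallSet N Z).card = 1 := by
    have := Finset.card_pos.2 hfne
    omega
  have hr1 : (riseSet N Z).card = 1 := by omega
  obtain ⟨f, hf⟩ := Finset.card_eq_one.1 hf1
  obtain ⟨r, hr⟩ := Finset.card_eq_one.1 hr1
  have hfZ : f ∈ Z ∧ f + 1 ∉ Z := mem_fallSet.1 (hf ▸ Finset.mem_singleton_self f)
  have hrZ : r ∉ Z ∧ r + 1 ∈ Z := mem_riseSet.1 (hr ▸ Finset.mem_singleton_self r)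
  have P1 : ∀ j, j ∈ Z → j + 1 ∉ Z → j = f := by
    intro j h1 h2
    have : j ∈ fallSet N Z := mem_fallSet.2 ⟨h1, h2⟩
    rw [hf] at this; exact Finset.mem_singleton.1 this
  have P2 : ∀ j, j ∉ Z → j + 1 ∈ Z → j = r := by
    intro j h1 h2
    have : j ∈ riseSet N Z := mem_riseSet.2 ⟨h1, h2⟩
    rw [hr] at this; exact Finset.mem_singleton.1 this
  set t := (f - r).val with ht
  have htN : t < N := ZMod.val_lt _
  have ht0 : t ≠ 0 := by
    intro h0
    have : f - r = 0 := (ZMod.val_eq_zero _).1 h0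
    have : f = r := by rwa [sub_eq_zero] at this
    exact hrZ.1 (this ▸ hfZ.1)
  have hcast : ((t : ℕ) : ZMod N) = f - r := ZMod.natCast_rightInverse _
  -- upward claim
  have up : ∀ k : ℕ, 1 ≤ k → k ≤ t → r + (k : ZMod N) ∈ Z := by
    intro k hk1 hkt
    induction k with
    | zero => omega
    | succ n ih =>
        rcases Nat.eq_or_lt_of_le hk1 with h | h
        · simpa [← h] using hrZ.2
        · have hn1 : 1 ≤ n := by omega
          have hnt : n ≤ t := by omega
          have hin := ih hn1 hnt
          by_contra hout
          have : r + (n : ZMod N) = f := by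
            apply P1 _ hin
            push_cast at hout ⊢
            rw [add_assoc]
            exact hout
          have : ((n : ℕ) : ZMod N) = f - r := by rw [← this]; ring
          have : ((n : ℕ) : ZMod N) = ((t : ℕ) : ZMod N) := by rw [this, hcast]
          have : n = t := by
            have := congrArg ZMod.val this
            rwa [ZMod.val_cast_of_lt (by omega), ZMod.val_cast_of_lt (by omega)] at this
          omega
  -- downward claim
  have down : ∀ k : ℕ, t < k → k < N → r + (k : ZMod N) ∉ Z := by
    intro k hkt hkN
    induction k with
    | zero => omega
    | succ n ih =>
        rcases Nat.eq_or_lt_of_le hkt with h | h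
        · -- n + 1 = t + 1
          have hn' : n = t := by omega
          have heq : r + ((n + 1 : ℕ) : ZMod N) = f + 1 := by
            rw [hn']
            push_cast
            rw [hcast]
            ring
          rw [heq]
          exact hfZ.2
        · have hin := ih (by omega) (by omega)
          by_contra hmem
          have hjr : r + (n : ZMod N) = r := by
            apply P2 _ hin
            push_cast at hmem ⊢
            rw [add_assoc]
            exact hmem
          have : ((n : ℕ) : ZMod N) = 0 := by
            have := congrArg (fun x => x - r) hjr
            simpa [add_comm] using this
          have : (n : ℕ) = 0 := by
            have := congrArg ZMod.val this
            rwa [ZMod.val_cast_of_lt (by omega), ZMod.val_zero] at this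
          omega
  -- Z = image of Icc 1 t
  have hZeq : Z = (Finset.Icc 1 t).image (fun k : ℕ => r + (k : ZMod N)) := by
    ext z
    constructor
    · intro hz
      rw [Finset.mem_image]
      refine ⟨(z - r).val, ?_, ?_⟩
      · rw [Finset.mem_Icc]
        constructor
        · have : (z - r).val ≠ 0 := by
            intro h0
            have : z - r = 0 := (ZMod.val_eq_zero _).1 h0
            have : z = r := by rwa [sub_eq_zero] at this
            exact hrZ.1 (this ▸ hz)
          omega
        · by_contra hgt
          have := down (z - r).val (by omega) (ZMod.val_lt _)
          rw [ZMod.natCast_rightInverse (z - r), add_sub_cancel] at this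
          exact this hz
      · rw [ZMod.natCast_rightInverse (z - r), add_sub_cancel]
    · intro hz
      rw [Finset.mem_image] at hz
      obtain ⟨k, hk, rfl⟩ := hz
      rw [Finset.mem_Icc] at hk
      exact up k hk.1 hk.2
  have hinj : Set.InjOn (fun k : ℕ => r + (k : ZMod N)) (Finset.Icc 1 t) := by
    intro a ha b hb hab
    simp only [Finset.coe_Icc, Set.mem_Icc] at ha hb
    simp only [add_right_inj] at hab
    have := congrArg ZMod.val hab
    rwa [ZMod.val_cast_of_lt (by omega), ZMod.val_cast_of_lt (by omega)] at this
  have htm : t = m := by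
    have := congrArg Finset.card hZeq
    rw [Finset.card_image_of_injOn hinj, Nat.card_Icc] at this
    omega
  refine ⟨r, ?_⟩
  rw [hZeq, htm]
  unfold Mset tr
  rw [Finset.image_image]
  apply Finset.image_congr
  intro k _
  simp [add_comm]

end Chunk2


section Chunk3
variable {N m : ℕ} [NeZero N] (hm2 : 2 ≤ m) (hmN : m + 2 ≤ N)

lemma sd_right_cancel (A B : Finset (ZMod N)) : (A ∆ B) ∆ B = A := by
  rw [symmDiff_assoc, symmDiff_self, symmDiff_bot]

lemma sd_left_cancel (A B : Finset (ZMod N)) : A ∆ (A ∆ B) = B :=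
  symmDiff_symmDiff_cancel_left A B

lemma mem_psector {X : Finset (ZMod N)} :
    X ∈ psector N m ↔ (X ∆ Mset N m).card = m ∧ 2 < nX N m X := by simp [psector]

include hm2 hmN in
lemma nX_Mset_tr_le (s : ZMod N) : nX N m (Mset N m ∆ tr N (Mset N m) s) ≤ 2 := by
  unfold nX
  rw [symmDiff_comm (Mset N m) (tr N (Mset N m) s), sd_right_cancel, pbdry_tr, tr_card]
  exact pbdry_Mset_card_le hm2 hmN

include hm2 hmN in
lemma nX_empty_le : nX N m (∅ : Finset (ZMod N)) ≤ 2 := by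
  unfold nX
  rw [show (∅ : Finset (ZMod N)) ∆ Mset N m = Mset N m from bot_symmDiff _]
  exact pbdry_Mset_card_le hm2 hmN

include hm2 hmN in
lemma pext_eq (e : Finset (ZMod N) → ℝ) (Y : Finset (ZMod N))
    (hY : (Y ∆ Mset N m).card = m) :
    pext N m e Y = if Y ∈ psector N m then e Y else (if Y = ∅ then 1 else 0) := by
  by_cases hsec : Y ∈ psector N m
  · rw [if_pos hsec]
    obtain ⟨-, hn⟩ := mem_psector.1 hsec
    have hne : Y ≠ ∅ := by
      intro h
      rw [h] at hn
      exact absurd hn (by simpa using nX_empty_le hm2 hmN)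
    have hnex : ¬ ∃ s : ZMod N, Y = Mset N m ∆ tr N (Mset N m) s := by
      rintro ⟨s, rfl⟩
      exact absurd hn (by simpa using nX_Mset_tr_le hm2 hmN s)
    rw [pext, if_neg hne, if_neg hnex]
  · rw [if_neg hsec]
    have hn : (pbdry N (Y ∆ Mset N m)).card ≤ 2 := by
      by_contra h
      exact hsec (mem_psector.2 ⟨hY, by simpa [nX] using not_le.mp h⟩)
    obtain ⟨s, hs⟩ := eq_tr_Mset_of_pbdry_le hm2 hmN _ hY hn
    have hYeq : Y = Mset N m ∆ tr N (Mset N m) s := by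
      have := congrArg (· ∆ Mset N m) hs
      rw [sd_right_cancel] at this
      rw [this, symmDiff_comm]
    by_cases hne : Y = ∅
    · rw [if_pos hne, pext, if_pos hne]
    · rw [if_neg hne, pext, if_neg hne, if_pos ⟨s, hYeq⟩]

include hm2 hmN in
lemma pext_sub (u v : Finset (ZMod N) → ℝ) (Y : Finset (ZMod N))
    (hY : (Y ∆ Mset N m).card = m) :
    pext N m u Y - pext N m v Y = if Y ∈ psector N m then u Y - v Y else 0 := by
  rw [pext_eq hm2 hmN u Y hY, pext_eq hm2 hmN v Y hY]
  by_cases hsec : Y ∈ psector N m <;> simp [hsec]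

lemma nX_pos_real {X : Finset (ZMod N)} (hX : X ∈ psector N m) :
    (1 : ℝ) ≤ (nX N m X : ℝ) - 2 := by
  obtain ⟨-, hn⟩ := mem_psector.1 hX
  have : (3 : ℕ) ≤ nX N m X := hn
  have : (3 : ℝ) ≤ (nX N m X : ℝ) := by exact_mod_cast this
  linarith

-- the quadratic argument set
lemma quad_sd (X : Finset (ZMod N)) (s : ZMod N) :
    (tr N X s ∆ tr N (Mset N m) s ∆ Mset N m) ∆ Mset N m = tr N (X ∆ Mset N m) s := by
  rw [sd_right_cancel, tr_symmDiff]

lemma quad_card (X : Finset (ZMod N)) (s : ZMod N) :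
    ((tr N X s ∆ tr N (Mset N m) s ∆ Mset N m) ∆ Mset N m).card = (X ∆ Mset N m).card := by
  rw [quad_sd, tr_card]

lemma quad_nX (X : Finset (ZMod N)) (s : ZMod N) :
    nX N m (tr N X s ∆ tr N (Mset N m) s ∆ Mset N m) = nX N m X := by
  unfold nX
  rw [quad_sd, pbdry_tr, tr_card]

lemma quad_mem_psector {X : Finset (ZMod N)} (hX : X ∈ psector N m) (s : ZMod N) :
    (tr N X s ∆ tr N (Mset N m) s ∆ Mset N m) ∈ psector N m := by
  obtain ⟨h1, h2⟩ := mem_psector.1 hX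
  exact mem_psector.2 ⟨by rw [quad_card, h1], by rw [quad_nX]; exact h2⟩

include hm2 hmN in
lemma SB3 (w : Finset (ZMod N) → ℝ) (s : ZMod N) :
    ∑ X ∈ psector N m, |w (tr N X s ∆ tr N (Mset N m) s ∆ Mset N m)|
      ≤ ∑ Y ∈ psector N m, ((nX N m Y : ℝ) - 2) * |w Y| := by
  have hinj : ∀ x ∈ psector N m, ∀ y ∈ psector N m,
      (tr N x s ∆ tr N (Mset N m) s ∆ Mset N m) = (tr N y s ∆ tr N (Mset N m) s ∆ Mset N m) → x = y := by
    intro x _ y _ h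
    have := congrArg (· ∆ Mset N m) h
    simp only [quad_sd] at this
    have := tr_inj this
    have := congrArg (· ∆ Mset N m) this
    simpa [sd_right_cancel] using this
  calc ∑ X ∈ psector N m, |w (tr N X s ∆ tr N (Mset N m) s ∆ Mset N m)|
      = ∑ Y ∈ (psector N m).image (fun X => tr N X s ∆ tr N (Mset N m) s ∆ Mset N m), |w Y| :=
        (Finset.sum_image (f := fun Y => |w Y|) hinj).symm
    _ ≤ ∑ Y ∈ psector N m, |w Y| := by
        apply Finset.sum_le_sum_of_subset_of_nonneg
        · intro Y hY
          rw [Finset.mem_image] at hY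
          obtain ⟨X, hX, rfl⟩ := hY
          exact quad_mem_psector hX s
        · intro i _ _; positivity
    _ ≤ ∑ Y ∈ psector N m, ((nX N m Y : ℝ) - 2) * |w Y| := by
        apply Finset.sum_le_sum
        intro Y hY
        nth_rewrite 1 [← one_mul |w Y|]
        apply mul_le_mul_of_nonneg_right (nX_pos_real hY) (abs_nonneg _)

end Chunk3

section Chunk4
variable {N m : ℕ} [NeZero N] (hm2 : 2 ≤ m) (hmN : m + 2 ≤ N)

lemma fiber_le_sub_two {Y : Finset (ZMod N)} (hY : Y ∈ psector N m) (hmN' : m + 2 ≤ N)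
    (hm2' : 2 ≤ m) (C : Finset (ZMod N)) :
    ((Finset.univ.filter (fun s : ZMod N => tr N C s = Y ∆ Mset N m)).card : ℝ)
      ≤ (nX N m Y : ℝ) - 2 := by
  obtain ⟨hcard, hn⟩ := mem_psector.1 hY
  have hne : (Y ∆ Mset N m).Nonempty := Finset.card_pos.1 (by omega)
  have hlt : (Y ∆ Mset N m).card < N := by omega
  have h1 := fiber_card_le_fall C (Y ∆ Mset N m) hne hlt
  have h2 := two_mul_fall_card (Y ∆ Mset N m)
  have hn' : 2 < (pbdry N (Y ∆ Mset N m)).card := hn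
  have hnat : (Finset.univ.filter (fun s : ZMod N => tr N C s = Y ∆ Mset N m)).card
      ≤ nX N m Y - 2 := by
    unfold nX
    omega
  have h3 : 2 ≤ nX N m Y := by unfold nX; omega
  calc ((Finset.univ.filter (fun s : ZMod N => tr N C s = Y ∆ Mset N m)).card : ℝ)
      ≤ ((nX N m Y - 2 : ℕ) : ℝ) := by exact_mod_cast hnat
    _ = (nX N m Y : ℝ) - 2 := by
        rw [Nat.cast_sub h3]; norm_num

include hm2 hmN in
lemma SB1 (u v : Finset (ZMod N) → ℝ) (C : Finset (ZMod N)) (hC : C.card = m) :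
    ∑ s : ZMod N, |pext N m u (Mset N m ∆ tr N C s) - pext N m v (Mset N m ∆ tr N C s)|
      ≤ ∑ Y ∈ psector N m, ((nX N m Y : ℝ) - 2) * |u Y - v Y| := by
  set g : ZMod N → Finset (ZMod N) := fun s => Mset N m ∆ tr N C s with hg
  have hsd : ∀ s, (g s) ∆ Mset N m = tr N C s := by
    intro s
    show (Mset N m ∆ tr N C s) ∆ Mset N m = tr N C s
    rw [symmDiff_comm (Mset N m) (tr N C s), sd_right_cancel]
  have hcard : ∀ s, ((g s) ∆ Mset N m).card = m := by
    intro s; rw [hsd, tr_card, hC]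
  have hterm : ∀ s : ZMod N, |pext N m u (g s) - pext N m v (g s)|
      = if g s ∈ psector N m then |u (g s) - v (g s)| else 0 := by
    intro s
    rw [pext_sub hm2 hmN u v _ (hcard s), apply_ite abs, abs_zero]
  calc ∑ s : ZMod N, |pext N m u (Mset N m ∆ tr N C s) - pext N m v (Mset N m ∆ tr N C s)|
      = ∑ s : ZMod N, if g s ∈ psector N m then |u (g s) - v (g s)| else 0 := by
        apply Finset.sum_congr rfl; intro s _; exact hterm s
    _ = ∑ s ∈ Finset.univ.filter (fun s => g s ∈ psector N m), |u (g s) - v (g s)| :=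
        (Finset.sum_filter _ _).symm
    _ = ∑ Y ∈ (Finset.univ.filter (fun s => g s ∈ psector N m)).image g,
          ((Finset.univ.filter (fun s => g s ∈ psector N m)).filter (fun s => g s = Y)).card
            • |u Y - v Y| :=
        Finset.sum_comp (fun Y => |u Y - v Y|) g
    _ ≤ ∑ Y ∈ (Finset.univ.filter (fun s => g s ∈ psector N m)).image g,
          ((nX N m Y : ℝ) - 2) * |u Y - v Y| := by
        apply Finset.sum_le_sum
        intro Y hYim
        rw [Finset.mem_image] at hYim
        obtain ⟨s₀, hs₀, rfl⟩ := hYim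
        have hYsec : g s₀ ∈ psector N m := (Finset.mem_filter.1 hs₀).2
        rw [nsmul_eq_mul]
        apply mul_le_mul_of_nonneg_right _ (abs_nonneg _)
        calc (((Finset.univ.filter (fun s => g s ∈ psector N m)).filter (fun s => g s = g s₀)).card : ℝ)
            ≤ ((Finset.univ.filter (fun s : ZMod N => tr N C s = (g s₀) ∆ Mset N m)).card : ℝ) := by
              apply Nat.cast_le.2
              apply Finset.card_le_card
              intro s hs
              simp only [Finset.mem_filter, Finset.mem_univ, true_and] at hs ⊢
              rw [← hs.2, hsd]
          _ ≤ (nX N m (g s₀) : ℝ) - 2 := fiber_le_sub_two hYsec hmN hm2 C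
    _ ≤ ∑ Y ∈ psector N m, ((nX N m Y : ℝ) - 2) * |u Y - v Y| := by
        apply Finset.sum_le_sum_of_subset_of_nonneg
        · intro Y hY
          rw [Finset.mem_image] at hY
          obtain ⟨s, hs, rfl⟩ := hY
          exact (Finset.mem_filter.1 hs).2
        · intro Y hY _
          have h1 := nX_pos_real hY
          have : (0:ℝ) ≤ (nX N m Y : ℝ) - 2 := by linarith
          positivity

lemma sd_rotate (X P B : Finset (ZMod N)) : (X ∆ P) ∆ B = (X ∆ B) ∆ P := by
  rw [symmDiff_assoc, symmDiff_comm P B, ← symmDiff_assoc]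

include hm2 hmN in
lemma SB2 (u v : Finset (ZMod N) → ℝ) :
    ∑ X ∈ psector N m, ∑ j ∈ pbdry N (X ∆ Mset N m),
        |pext N m u (X ∆ {j, j+1}) - pext N m v (X ∆ {j, j+1})|
      ≤ 3 * ∑ Y ∈ psector N m, ((nX N m Y : ℝ) - 2) * |u Y - v Y| := by
  classical
  set dd : Finset (ZMod N) → ℝ := fun Y => |pext N m u Y - pext N m v Y| with hdd
  set A : Finset (Finset (ZMod N) × ZMod N) :=
    Finset.univ.filter (fun z => z.1 ∈ psector N m ∧ z.2 ∈ pbdry N (z.1 ∆ Mset N m)) with hA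
  set B : Finset (Finset (ZMod N) × ZMod N) :=
    Finset.univ.filter (fun w => (w.1 ∆ Mset N m).card = m ∧ w.2 ∈ pbdry N (w.1 ∆ Mset N m)) with hB
  have hAmem : ∀ z : Finset (ZMod N) × ZMod N,
      z ∈ A ↔ z.1 ∈ psector N m ∧ z.2 ∈ pbdry N (z.1 ∆ Mset N m) := by
    intro z
    rw [hA, Finset.mem_filter]
    simp only [Finset.mem_univ, true_and]
  have step1 : ∑ X ∈ psector N m, ∑ j ∈ pbdry N (X ∆ Mset N m), dd (X ∆ {j, j+1})
      = ∑ z ∈ A, dd (z.1 ∆ {z.2, z.2 + 1}) := by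
    have h := Finset.sum_finset_product A (psector N m) (fun X => pbdry N (X ∆ Mset N m))
      (f := fun z => dd (z.1 ∆ {z.2, z.2 + 1})) hAmem
    exact h.symm
  have hinj : ∀ z ∈ A, ∀ z' ∈ A,
      (z.1 ∆ {z.2, z.2 + 1}, z.2) = (z'.1 ∆ {z'.2, z'.2 + 1}, z'.2) → z = z' := by
    intro z _ z' _ h
    obtain ⟨h1, h2⟩ := Prod.mk.injEq _ _ _ _ ▸ h
    rw [h2] at h1
    apply Prod.ext _ h2
    have := congrArg (· ∆ ({z'.2, z'.2 + 1} : Finset (ZMod N))) h1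
    simpa [sd_right_cancel] using this
  have step2 : ∑ z ∈ A, dd (z.1 ∆ {z.2, z.2 + 1})
      = ∑ w ∈ A.image (fun z => (z.1 ∆ {z.2, z.2 + 1}, z.2)), dd w.1 := by
    exact (Finset.sum_image (f := fun w => dd w.1)
      (g := fun z : Finset (ZMod N) × ZMod N => (z.1 ∆ {z.2, z.2 + 1}, z.2)) hinj).symm
  have himsub : A.image (fun z => (z.1 ∆ {z.2, z.2 + 1}, z.2)) ⊆ B := by
    intro w hw
    rw [Finset.mem_image] at hw
    obtain ⟨z, hz, rfl⟩ := hw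
    obtain ⟨hz1, hz2⟩ := (hAmem z).1 hz
    obtain ⟨hzc, -⟩ := mem_psector.1 hz1
    simp only [hB, Finset.mem_filter, Finset.mem_univ, true_and]
    constructor
    · rw [sd_rotate, toggle_card hmN (mem_pbdry.1 hz2), hzc]
    · rw [sd_rotate]
      exact (mem_pbdry_toggle (A := z.1 ∆ Mset N m)).2 hz2
  have step3 : ∑ w ∈ A.image (fun z => (z.1 ∆ {z.2, z.2 + 1}, z.2)), dd w.1
      ≤ ∑ w ∈ B, dd w.1 := by
    apply Finset.sum_le_sum_of_subset_of_nonneg himsub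
    intro w _ _
    exact abs_nonneg _
  have hBmem : ∀ w : Finset (ZMod N) × ZMod N,
      w ∈ B ↔ w.1 ∈ Finset.univ.filter (fun Y => (Y ∆ Mset N m).card = m)
        ∧ w.2 ∈ pbdry N (w.1 ∆ Mset N m) := by
    intro w
    rw [hB, Finset.mem_filter]
    simp only [Finset.mem_filter, Finset.mem_univ, true_and]
  have step4 : ∑ w ∈ B, dd w.1
      = ∑ Y ∈ Finset.univ.filter (fun Y => (Y ∆ Mset N m).card = m),
          (nX N m Y : ℝ) * dd Y := by
    rw [Finset.sum_finset_product B (Finset.univ.filter (fun Y => (Y ∆ Mset N m).card = m))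
      (fun Y => pbdry N (Y ∆ Mset N m)) hBmem]
    apply Finset.sum_congr rfl
    intro Y _
    have hc : ∀ a ∈ pbdry N (Y ∆ Mset N m), dd ((Y, a).1) = dd Y := fun a _ => rfl
    rw [Finset.sum_congr rfl hc, Finset.sum_const, nsmul_eq_mul]
    rfl
  have step5 : ∑ Y ∈ Finset.univ.filter (fun Y => (Y ∆ Mset N m).card = m),
      (nX N m Y : ℝ) * dd Y
      ≤ ∑ Y ∈ psector N m, (nX N m Y : ℝ) * |u Y - v Y| := by
    have : ∀ Y ∈ Finset.univ.filter (fun Y : Finset (ZMod N) => (Y ∆ Mset N m).card = m),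
        (nX N m Y : ℝ) * dd Y
          = if Y ∈ psector N m then (nX N m Y : ℝ) * |u Y - v Y| else 0 := by
      intro Y hY
      rw [Finset.mem_filter] at hY
      rw [hdd]
      simp only
      rw [pext_sub hm2 hmN u v Y hY.2, apply_ite abs, abs_zero, mul_ite, mul_zero]
    rw [Finset.sum_congr rfl this, ← Finset.sum_filter]
    apply Finset.sum_le_sum_of_subset_of_nonneg
    · intro Y hY
      exact (Finset.mem_filter.1 hY).2
    · intro Y _ _
      positivity
  have step6 : ∑ Y ∈ psector N m, (nX N m Y : ℝ) * |u Y - v Y|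
      ≤ 3 * ∑ Y ∈ psector N m, ((nX N m Y : ℝ) - 2) * |u Y - v Y| := by
    rw [Finset.mul_sum]
    apply Finset.sum_le_sum
    intro Y hY
    have h1 := nX_pos_real hY
    have : (nX N m Y : ℝ) ≤ 3 * ((nX N m Y : ℝ) - 2) := by linarith
    rw [← mul_assoc]
    exact mul_le_mul_of_nonneg_right (by linarith) (abs_nonneg _)
  calc ∑ X ∈ psector N m, ∑ j ∈ pbdry N (X ∆ Mset N m),
        |pext N m u (X ∆ {j, j+1}) - pext N m v (X ∆ {j, j+1})|
      = ∑ z ∈ A, dd (z.1 ∆ {z.2, z.2 + 1}) := step1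
    _ = ∑ w ∈ A.image (fun z => (z.1 ∆ {z.2, z.2 + 1}, z.2)), dd w.1 := step2
    _ ≤ ∑ w ∈ B, dd w.1 := step3
    _ = ∑ Y ∈ Finset.univ.filter (fun Y => (Y ∆ Mset N m).card = m), (nX N m Y : ℝ) * dd Y := step4
    _ ≤ ∑ Y ∈ psector N m, (nX N m Y : ℝ) * |u Y - v Y| := step5
    _ ≤ 3 * ∑ Y ∈ psector N m, ((nX N m Y : ℝ) - 2) * |u Y - v Y| := step6

end Chunk4
section Chunk5
variable {N m : ℕ} [NeZero N] (hm2 : 2 ≤ m) (hmN : m + 2 ≤ N)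

lemma tr_pair (b s : ZMod N) : tr N {b, b+1} s = {b + s, (b + s) + 1} := by
  ext x
  simp only [mem_tr, Finset.mem_insert, Finset.mem_singleton, sub_eq_iff_eq_add]
  constructor
  · rintro (h | h)
    · left; rw [h]
    · right; rw [h]; ring
  · rintro (h | h)
    · left; rw [h]
    · right; rw [h]; ring

lemma pnorm_nonneg' (p : (ZMod N → ℝ) × (Finset (ZMod N) → ℝ)) : 0 ≤ pnorm N m p := by
  unfold pnorm
  have h1 : (0:ℝ) ≤ ∑ s : ZMod N, |p.1 s| := Finset.sum_nonneg fun s _ => abs_nonneg _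
  have h2 : (0:ℝ) ≤ ∑ X ∈ psector N m, ((nX N m X : ℝ) - 2) * |p.2 X| := by
    apply Finset.sum_nonneg
    intro X hX
    have := nX_pos_real hX
    positivity
  linarith

lemma pnorm_sub_expand (x y : (ZMod N → ℝ) × (Finset (ZMod N) → ℝ)) :
    pnorm N m (x - y) = ∑ s : ZMod N, |x.1 s - y.1 s|
      + 2 * ∑ X ∈ psector N m, ((nX N m X : ℝ) - 2) * |x.2 X - y.2 X| := by
  unfold pnorm
  simp only [Prod.fst_sub, Prod.snd_sub, Pi.sub_apply]

lemma pnorm_add_le (x y : (ZMod N → ℝ) × (Finset (ZMod N) → ℝ)) :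
    pnorm N m (x + y) ≤ pnorm N m x + pnorm N m y := by
  unfold pnorm
  simp only [Prod.fst_add, Prod.snd_add, Pi.add_apply]
  have h1 : ∑ s : ZMod N, |x.1 s + y.1 s| ≤ ∑ s : ZMod N, |x.1 s| + ∑ s : ZMod N, |y.1 s| := by
    rw [← Finset.sum_add_distrib]
    exact Finset.sum_le_sum fun s _ => abs_add_le _ _
  have h2 : ∑ X ∈ psector N m, ((nX N m X : ℝ) - 2) * |x.2 X + y.2 X|
      ≤ ∑ X ∈ psector N m, ((nX N m X : ℝ) - 2) * |x.2 X|
        + ∑ X ∈ psector N m, ((nX N m X : ℝ) - 2) * |y.2 X| := by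
    rw [← Finset.sum_add_distrib]
    apply Finset.sum_le_sum
    intro X hX
    have hp := nX_pos_real hX
    rw [← mul_add]
    exact mul_le_mul_of_nonneg_left (abs_add_le _ _) (by linarith)
  linarith

lemma pnorm_zero : pnorm N m (0 : (ZMod N → ℝ) × (Finset (ZMod N) → ℝ)) = 0 := by
  unfold pnorm
  simp

-- main Lipschitz estimate
include hm2 hmN in
lemma lip (ε : ℝ) (p q : (ZMod N → ℝ) × (Finset (ZMod N) → ℝ)) :
    pnorm N m (dropF N m ε p - dropF N m ε q)
      ≤ (5 * |ε| + (pnorm N m p + pnorm N m q) / 2) * pnorm N m (p - q) := by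
  classical
  set T : ℝ := ∑ Y ∈ psector N m, ((nX N m Y : ℝ) - 2) * |p.2 Y - q.2 Y| with hT
  set a : ℝ := ∑ s : ZMod N, |p.1 s - q.1 s| with ha
  have hTnn : 0 ≤ T := by
    apply Finset.sum_nonneg
    intro Y hY
    have := nX_pos_real hY
    positivity
  have hann : 0 ≤ a := Finset.sum_nonneg fun s _ => abs_nonneg _
  have hMcard : (Mset N m).card = m := card_Mset hmN
  -- Part A
  have partA : ∑ s : ZMod N, |(dropF N m ε p).1 s - (dropF N m ε q).1 s| ≤ 4 * |ε| * T := by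
    have hper : ∀ s : ZMod N, |(dropF N m ε p).1 s - (dropF N m ε q).1 s|
        ≤ 2 * |ε| * ∑ b ∈ pbdry N (Mset N m),
            |pext N m p.2 (Mset N m ∆ tr N (Mset N m ∆ {b, b+1}) (-s))
              - pext N m q.2 (Mset N m ∆ tr N (Mset N m ∆ {b, b+1}) (-s))| := by
      intro s
      have h1 : (dropF N m ε p).1 s - (dropF N m ε q).1 s
          = 2 * ε * ∑ j ∈ pbdry N (tr N (Mset N m) (-s)),
              (pext N m p.2 (Mset N m ∆ tr N (Mset N m) (-s) ∆ {j, j + 1})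
                - pext N m q.2 (Mset N m ∆ tr N (Mset N m) (-s) ∆ {j, j + 1})) := by
        show 2 * ε * _ - 2 * ε * _ = _
        rw [← mul_sub, Finset.sum_sub_distrib]
      rw [h1, abs_mul, abs_mul, abs_two]
      have h2 : ∑ j ∈ pbdry N (tr N (Mset N m) (-s)),
            (pext N m p.2 (Mset N m ∆ tr N (Mset N m) (-s) ∆ {j, j + 1})
              - pext N m q.2 (Mset N m ∆ tr N (Mset N m) (-s) ∆ {j, j + 1}))
          = ∑ b ∈ pbdry N (Mset N m),
              (pext N m p.2 (Mset N m ∆ tr N (Mset N m ∆ {b, b+1}) (-s))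
                - pext N m q.2 (Mset N m ∆ tr N (Mset N m ∆ {b, b+1}) (-s))) := by
        rw [pbdry_tr]
        rw [show tr N (pbdry N (Mset N m)) (-s) = (pbdry N (Mset N m)).image (· + (-s)) from rfl]
        rw [Finset.sum_image (by intro x _ y _ h; simpa using h)]
        apply Finset.sum_congr rfl
        intro b _
        have harg : Mset N m ∆ tr N (Mset N m) (-s) ∆ {b + -s, b + -s + 1}
            = Mset N m ∆ tr N (Mset N m ∆ {b, b+1}) (-s) := by
          rw [tr_symmDiff, ← tr_pair b (-s), symmDiff_assoc]
        rw [harg]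
      rw [h2]
      exact mul_le_mul_of_nonneg_left (Finset.abs_sum_le_sum_abs _ _) (by positivity)
    calc ∑ s : ZMod N, |(dropF N m ε p).1 s - (dropF N m ε q).1 s|
        ≤ ∑ s : ZMod N, 2 * |ε| * ∑ b ∈ pbdry N (Mset N m),
            |pext N m p.2 (Mset N m ∆ tr N (Mset N m ∆ {b, b+1}) (-s))
              - pext N m q.2 (Mset N m ∆ tr N (Mset N m ∆ {b, b+1}) (-s))| :=
          Finset.sum_le_sum fun s _ => hper s
      _ = 2 * |ε| * ∑ b ∈ pbdry N (Mset N m), ∑ s : ZMod N,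
            |pext N m p.2 (Mset N m ∆ tr N (Mset N m ∆ {b, b+1}) s)
              - pext N m q.2 (Mset N m ∆ tr N (Mset N m ∆ {b, b+1}) s)| := by
          rw [← Finset.mul_sum, Finset.sum_comm]
          congr 1
          apply Finset.sum_congr rfl
          intro b _
          exact Fintype.sum_equiv (Equiv.neg (ZMod N)) _ _ (fun s => rfl)
      _ ≤ 2 * |ε| * ∑ b ∈ pbdry N (Mset N m), T := by
          apply mul_le_mul_of_nonneg_left _ (by positivity)
          apply Finset.sum_le_sum
          intro b hb
          apply SB1 hm2 hmN
          rw [toggle_card hmN (mem_pbdry.1 hb), hMcard]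
      _ ≤ 4 * |ε| * T := by
          rw [Finset.sum_const, nsmul_eq_mul]
          have hc : ((pbdry N (Mset N m)).card : ℝ) ≤ 2 := by
            exact_mod_cast pbdry_Mset_card_le hm2 hmN
          calc 2 * |ε| * (((pbdry N (Mset N m)).card : ℝ) * T)
              ≤ 2 * |ε| * (2 * T) := by
                apply mul_le_mul_of_nonneg_left _ (by positivity)
                exact mul_le_mul_of_nonneg_right hc hTnn
            _ = 4 * |ε| * T := by ring
  -- Part B
  have partB : 2 * ∑ X ∈ psector N m, ((nX N m X : ℝ) - 2) * |(dropF N m ε p).2 X - (dropF N m ε q).2 X|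
      ≤ 6 * |ε| * T + a * (∑ Y ∈ psector N m, ((nX N m Y : ℝ) - 2) * |p.2 Y|)
        + (∑ s : ZMod N, |q.1 s|) * T := by
    have hperX : ∀ X ∈ psector N m,
        ((nX N m X : ℝ) - 2) * |(dropF N m ε p).2 X - (dropF N m ε q).2 X|
          ≤ |ε| * ∑ j ∈ pbdry N (X ∆ Mset N m),
                |pext N m p.2 (X ∆ {j, j+1}) - pext N m q.2 (X ∆ {j, j+1})|
            + (1/2) * ∑ s : ZMod N,
                (|p.1 s - q.1 s| * |p.2 (tr N X s ∆ tr N (Mset N m) s ∆ Mset N m)|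
                  + |q.1 s| * |p.2 (tr N X s ∆ tr N (Mset N m) s ∆ Mset N m)
                      - q.2 (tr N X s ∆ tr N (Mset N m) s ∆ Mset N m)|) := by
      intro X hX
      obtain ⟨hc, hn⟩ := mem_psector.1 hX
      have hpos : (1:ℝ) ≤ (nX N m X : ℝ) - 2 := nX_pos_real hX
      have hcond : (X ∆ Mset N m).card = m ∧ 2 < nX N m X := ⟨hc, hn⟩
      have hFp : (dropF N m ε p).2 X = -(ε / ((nX N m X : ℝ) - 2)) *
            (∑ j ∈ pbdry N (X ∆ Mset N m), pext N m p.2 (X ∆ {j, j + 1}))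
          + (1 / (2 * ((nX N m X : ℝ) - 2))) *
              ∑ s : ZMod N, p.1 s * pext N m p.2 (tr N X s ∆ tr N (Mset N m) s ∆ Mset N m) := by
        show (if _ then _ else _) = _
        rw [if_pos hcond]
      have hFq : (dropF N m ε q).2 X = -(ε / ((nX N m X : ℝ) - 2)) *
            (∑ j ∈ pbdry N (X ∆ Mset N m), pext N m q.2 (X ∆ {j, j + 1}))
          + (1 / (2 * ((nX N m X : ℝ) - 2))) *
              ∑ s : ZMod N, q.1 s * pext N m q.2 (tr N X s ∆ tr N (Mset N m) s ∆ Mset N m) := by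
        show (if _ then _ else _) = _
        rw [if_pos hcond]
      -- rewrite quadratic pext as plain values
      have hquadp : ∀ s : ZMod N, pext N m p.2 (tr N X s ∆ tr N (Mset N m) s ∆ Mset N m)
          = p.2 (tr N X s ∆ tr N (Mset N m) s ∆ Mset N m) := by
        intro s
        rw [pext_eq hm2 hmN p.2 _ (by rw [quad_card]; exact hc), if_pos (quad_mem_psector hX s)]
      have hquadq : ∀ s : ZMod N, pext N m q.2 (tr N X s ∆ tr N (Mset N m) s ∆ Mset N m)
          = q.2 (tr N X s ∆ tr N (Mset N m) s ∆ Mset N m) := by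
        intro s
        rw [pext_eq hm2 hmN q.2 _ (by rw [quad_card]; exact hc), if_pos (quad_mem_psector hX s)]
      set n2 : ℝ := (nX N m X : ℝ) - 2 with hn2
      set SA : ℝ := ∑ j ∈ pbdry N (X ∆ Mset N m),
          (pext N m p.2 (X ∆ {j, j + 1}) - pext N m q.2 (X ∆ {j, j + 1})) with hSA
      set SQ : ℝ := ∑ s : ZMod N,
          (p.1 s * p.2 (tr N X s ∆ tr N (Mset N m) s ∆ Mset N m)
            - q.1 s * q.2 (tr N X s ∆ tr N (Mset N m) s ∆ Mset N m)) with hSQ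
      have hdiffeq : (dropF N m ε p).2 X - (dropF N m ε q).2 X
          = -(ε / n2) * SA + (1 / (2 * n2)) * SQ := by
        rw [hFp, hFq]
        simp only [hquadp, hquadq]
        rw [hSA, hSQ, Finset.sum_sub_distrib, Finset.sum_sub_distrib]
        ring
      rw [hdiffeq]
      have hn2pos : (0:ℝ) < n2 := by rw [hn2]; linarith
      have e0 : n2 * |(-(ε / n2)) * SA + (1 / (2 * n2)) * SQ|
          ≤ n2 * |(-(ε / n2)) * SA| + n2 * |(1 / (2 * n2)) * SQ| := by
        rw [← mul_add]
        exact mul_le_mul_of_nonneg_left (abs_add_le _ _) (le_of_lt hn2pos)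
      have e1 : n2 * |(-(ε / n2)) * SA| ≤ |ε| * ∑ j ∈ pbdry N (X ∆ Mset N m),
          |pext N m p.2 (X ∆ {j, j+1}) - pext N m q.2 (X ∆ {j, j+1})| := by
        rw [abs_mul, abs_neg, abs_div, abs_of_pos hn2pos]
        have : n2 * (|ε| / n2 * |SA|) = |ε| * |SA| := by field_simp
        rw [this]
        exact mul_le_mul_of_nonneg_left (Finset.abs_sum_le_sum_abs _ _) (abs_nonneg ε)
      have e2 : n2 * |(1 / (2 * n2)) * SQ| ≤ (1/2) * ∑ s : ZMod N,
          (|p.1 s - q.1 s| * |p.2 (tr N X s ∆ tr N (Mset N m) s ∆ Mset N m)|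
            + |q.1 s| * |p.2 (tr N X s ∆ tr N (Mset N m) s ∆ Mset N m)
                - q.2 (tr N X s ∆ tr N (Mset N m) s ∆ Mset N m)|) := by
        rw [abs_mul, abs_of_pos (show (0:ℝ) < 1 / (2 * n2) by positivity)]
        have : n2 * (1 / (2 * n2) * |SQ|) = (1/2) * |SQ| := by field_simp
        rw [this]
        apply mul_le_mul_of_nonneg_left _ (by norm_num : (0:ℝ) ≤ 1/2)
        refine le_trans (Finset.abs_sum_le_sum_abs _ _) ?_
        apply Finset.sum_le_sum
        intro s _
        set Y := tr N X s ∆ tr N (Mset N m) s ∆ Mset N m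
        calc |p.1 s * p.2 Y - q.1 s * q.2 Y|
            = |(p.1 s - q.1 s) * p.2 Y + q.1 s * (p.2 Y - q.2 Y)| := by ring_nf
          _ ≤ |(p.1 s - q.1 s) * p.2 Y| + |q.1 s * (p.2 Y - q.2 Y)| := abs_add_le _ _
          _ = |p.1 s - q.1 s| * |p.2 Y| + |q.1 s| * |p.2 Y - q.2 Y| := by
              rw [abs_mul, abs_mul]
      linarith
    calc 2 * ∑ X ∈ psector N m, ((nX N m X : ℝ) - 2) * |(dropF N m ε p).2 X - (dropF N m ε q).2 X|
        ≤ 2 * ∑ X ∈ psector N m, (|ε| * ∑ j ∈ pbdry N (X ∆ Mset N m),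
              |pext N m p.2 (X ∆ {j, j+1}) - pext N m q.2 (X ∆ {j, j+1})|
            + (1/2) * ∑ s : ZMod N,
                (|p.1 s - q.1 s| * |p.2 (tr N X s ∆ tr N (Mset N m) s ∆ Mset N m)|
                  + |q.1 s| * |p.2 (tr N X s ∆ tr N (Mset N m) s ∆ Mset N m)
                      - q.2 (tr N X s ∆ tr N (Mset N m) s ∆ Mset N m)|)) := by
          have := Finset.sum_le_sum hperX
          linarith
      _ = 2 * |ε| * (∑ X ∈ psector N m, ∑ j ∈ pbdry N (X ∆ Mset N m),
              |pext N m p.2 (X ∆ {j, j+1}) - pext N m q.2 (X ∆ {j, j+1})|)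
          + ∑ X ∈ psector N m, ∑ s : ZMod N,
              (|p.1 s - q.1 s| * |p.2 (tr N X s ∆ tr N (Mset N m) s ∆ Mset N m)|
                + |q.1 s| * |p.2 (tr N X s ∆ tr N (Mset N m) s ∆ Mset N m)
                    - q.2 (tr N X s ∆ tr N (Mset N m) s ∆ Mset N m)|) := by
          rw [Finset.sum_add_distrib, ← Finset.mul_sum, ← Finset.mul_sum]
          ring
      _ ≤ 2 * |ε| * (3 * T) + (a * (∑ Y ∈ psector N m, ((nX N m Y : ℝ) - 2) * |p.2 Y|)
            + (∑ s : ZMod N, |q.1 s|) * T) := by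
          have hSB2 := SB2 hm2 hmN p.2 q.2
          have hQ : ∑ X ∈ psector N m, ∑ s : ZMod N,
              (|p.1 s - q.1 s| * |p.2 (tr N X s ∆ tr N (Mset N m) s ∆ Mset N m)|
                + |q.1 s| * |p.2 (tr N X s ∆ tr N (Mset N m) s ∆ Mset N m)
                    - q.2 (tr N X s ∆ tr N (Mset N m) s ∆ Mset N m)|)
              ≤ a * (∑ Y ∈ psector N m, ((nX N m Y : ℝ) - 2) * |p.2 Y|)
                + (∑ s : ZMod N, |q.1 s|) * T := by
            rw [Finset.sum_comm]
            have hper : ∀ s : ZMod N, ∑ X ∈ psector N m,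
                (|p.1 s - q.1 s| * |p.2 (tr N X s ∆ tr N (Mset N m) s ∆ Mset N m)|
                  + |q.1 s| * |p.2 (tr N X s ∆ tr N (Mset N m) s ∆ Mset N m)
                      - q.2 (tr N X s ∆ tr N (Mset N m) s ∆ Mset N m)|)
                ≤ |p.1 s - q.1 s| * (∑ Y ∈ psector N m, ((nX N m Y : ℝ) - 2) * |p.2 Y|)
                  + |q.1 s| * T := by
              intro s
              rw [Finset.sum_add_distrib, ← Finset.mul_sum, ← Finset.mul_sum]
              have b1 := SB3 hm2 hmN p.2 s
              have b2 := SB3 hm2 hmN (fun Y => p.2 Y - q.2 Y) s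
              apply add_le_add
              · exact mul_le_mul_of_nonneg_left b1 (abs_nonneg _)
              · exact mul_le_mul_of_nonneg_left b2 (abs_nonneg _)
            refine le_trans (Finset.sum_le_sum fun s _ => hper s) (le_of_eq ?_)
            rw [Finset.sum_add_distrib, ← Finset.sum_mul, ← Finset.sum_mul]
          have h2 : 2 * |ε| * (∑ X ∈ psector N m, ∑ j ∈ pbdry N (X ∆ Mset N m),
              |pext N m p.2 (X ∆ {j, j+1}) - pext N m q.2 (X ∆ {j, j+1})|)
              ≤ 2 * |ε| * (3 * T) := by
            apply mul_le_mul_of_nonneg_left hSB2 (by positivity)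
          linarith
      _ = 6 * |ε| * T + a * (∑ Y ∈ psector N m, ((nX N m Y : ℝ) - 2) * |p.2 Y|)
            + (∑ s : ZMod N, |q.1 s|) * T := by ring
  -- combine
  have hW : ∑ Y ∈ psector N m, ((nX N m Y : ℝ) - 2) * |p.2 Y| ≤ pnorm N m p / 2 := by
    unfold pnorm
    have h1 : (0:ℝ) ≤ ∑ s : ZMod N, |p.1 s| := Finset.sum_nonneg fun s _ => abs_nonneg _
    linarith
  have hQ1 : ∑ s : ZMod N, |q.1 s| ≤ pnorm N m q := by
    unfold pnorm
    have h2 : (0:ℝ) ≤ ∑ X ∈ psector N m, ((nX N m X : ℝ) - 2) * |q.2 X| := by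
      apply Finset.sum_nonneg
      intro X hX
      have := nX_pos_real hX
      positivity
    linarith
  have hd : pnorm N m (p - q) = a + 2 * T := pnorm_sub_expand (N:=N) (m:=m) p q
  have hdF := pnorm_sub_expand (N:=N) (m:=m) (dropF N m ε p) (dropF N m ε q)
  rw [hdF, hd]
  have hppos := pnorm_nonneg' (N := N) (m := m) p
  have hqpos := pnorm_nonneg' (N := N) (m := m) q
  have hq1nn : (0:ℝ) ≤ ∑ s : ZMod N, |q.1 s| := Finset.sum_nonneg fun s _ => abs_nonneg _
  have hWnn : (0:ℝ) ≤ ∑ Y ∈ psector N m, ((nX N m Y : ℝ) - 2) * |p.2 Y| := by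
    apply Finset.sum_nonneg
    intro Y hY
    have := nX_pos_real hY
    positivity
  nlinarith [mul_le_mul_of_nonneg_left hW hann, mul_le_mul_of_nonneg_left hQ1 hTnn,
    abs_nonneg ε, mul_nonneg hann (pnorm_nonneg' (N := N) (m := m) p),
    mul_nonneg hTnn hqpos]

end Chunk5
section Chunk6
variable {N m : ℕ} [NeZero N] (hm2 : 2 ≤ m) (hmN : m + 2 ≤ N)

lemma pext_zero (Y : Finset (ZMod N)) :
    pext N m (0 : Finset (ZMod N) → ℝ) Y = if Y = ∅ then 1 else 0 := by
  unfold pext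
  by_cases h1 : Y = ∅
  · simp [h1]
  · simp only [if_neg h1]
    by_cases h2 : ∃ s, Y = Mset N m ∆ tr N (Mset N m) s
    · simp [h2]
    · simp [h2]

lemma sd_empty_iff (A B : Finset (ZMod N)) : A ∆ B = ∅ ↔ A = B := by
  rw [← Finset.bot_eq_empty, symmDiff_eq_bot]

include hm2 hmN in
lemma fiber_M_le_one (C : Finset (ZMod N)) :
    ((Finset.univ.filter (fun s : ZMod N => tr N C s = Mset N m)).card : ℝ) ≤ 1 := by
  have hMne : (Mset N m).Nonempty := by
    rw [← Finset.card_pos, card_Mset hmN]; omega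
  have hMlt : (Mset N m).card < N := by rw [card_Mset hmN]; omega
  have h1 := fiber_card_le_fall C (Mset N m) hMne hMlt
  have h2 := two_mul_fall_card (Mset N m)
  have h3 := pbdry_Mset_card_le hm2 hmN
  have : (Finset.univ.filter (fun s : ZMod N => tr N C s = Mset N m)).card ≤ 1 := by omega
  exact_mod_cast this

include hm2 hmN in
lemma pair_pbdry_M {X : Finset (ZMod N)} {j : ZMod N} (hX : X ∈ psector N m)
    (hXj : X = {j, j+1}) : j ∈ pbdry N (Mset N m) := by
  obtain ⟨hc, -⟩ := mem_psector.1 hX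
  have hXcard : X.card = 2 := by rw [hXj]; exact card_pair' hmN j
  have hi : (X ∩ Mset N m).card = 1 := by
    have hd : X ∆ Mset N m = (X \ Mset N m) ∪ (Mset N m \ X) := by
      ext x
      simp only [Finset.mem_symmDiff, Finset.mem_union, Finset.mem_sdiff]
    have hdisj : Disjoint (X \ Mset N m) (Mset N m \ X) := by
      rw [Finset.disjoint_left]
      intro a ha hb
      rw [Finset.mem_sdiff] at ha hb
      exact hb.2 ha.1
    have hcu : (X ∆ Mset N m).card = (X \ Mset N m).card + (Mset N m \ X).card := by
      rw [hd, Finset.card_union_of_disjoint hdisj]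
    have e1 : (X \ Mset N m).card + (X ∩ Mset N m).card = X.card :=
      Finset.card_sdiff_add_card_inter X (Mset N m)
    have e2 : (Mset N m \ X).card + (Mset N m ∩ X).card = (Mset N m).card :=
      Finset.card_sdiff_add_card_inter (Mset N m) X
    have e3 : (Mset N m ∩ X).card = (X ∩ Mset N m).card := by rw [Finset.inter_comm]
    have e4 : (Mset N m).card = m := card_Mset hmN
    have hXM : (X ∩ Mset N m).card ≤ 2 := by
      calc (X ∩ Mset N m).card ≤ X.card := Finset.card_le_card (Finset.inter_subset_left)
        _ = 2 := hXcard
    omega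
  rw [mem_pbdry]
  by_cases hj : j ∈ Mset N m <;> by_cases hj1 : j + 1 ∈ Mset N m
  · exfalso
    have hsub : ({j, j+1} : Finset (ZMod N)) ⊆ X ∩ Mset N m := by
      intro x hx
      rw [Finset.mem_insert, Finset.mem_singleton] at hx
      rcases hx with rfl | rfl
      · rw [Finset.mem_inter, hXj]; exact ⟨by simp, hj⟩
      · rw [Finset.mem_inter, hXj]; exact ⟨by simp, hj1⟩
    have := Finset.card_le_card hsub
    rw [card_pair' hmN j, hi] at this
    omega
  · left; exact ⟨hj, hj1⟩
  · right; exact ⟨hj, hj1⟩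
  · exfalso
    have : X ∩ Mset N m = ∅ := by
      ext x
      simp only [Finset.mem_inter, Finset.notMem_empty, iff_false]
      rintro ⟨hx1, hx2⟩
      rw [hXj, Finset.mem_insert, Finset.mem_singleton] at hx1
      rcases hx1 with rfl | rfl
      · exact hj hx2
      · exact hj1 hx2
    rw [this] at hi
    simp at hi

include hm2 hmN in
lemma zero_bound (ε : ℝ) :
    pnorm N m (dropF N m ε (0 : (ZMod N → ℝ) × (Finset (ZMod N) → ℝ))) ≤ 8 * |ε| := by
  classical
  have hMcard : (Mset N m).card = m := card_Mset hmN
  -- first component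
  have partA : ∑ s : ZMod N, |(dropF N m ε 0).1 s| ≤ 4 * |ε| := by
    have hper : ∀ s : ZMod N, |(dropF N m ε 0).1 s|
        ≤ 2 * |ε| * ∑ b ∈ pbdry N (Mset N m),
            (if Mset N m ∆ tr N (Mset N m ∆ {b, b+1}) (-s) = ∅ then (1:ℝ) else 0) := by
      intro s
      have h1 : (dropF N m ε 0).1 s = 2 * ε * ∑ j ∈ pbdry N (tr N (Mset N m) (-s)),
          pext N m (0 : Finset (ZMod N) → ℝ) (Mset N m ∆ tr N (Mset N m) (-s) ∆ {j, j + 1}) := rfl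
      have h2 : ∑ j ∈ pbdry N (tr N (Mset N m) (-s)),
            pext N m (0 : Finset (ZMod N) → ℝ) (Mset N m ∆ tr N (Mset N m) (-s) ∆ {j, j + 1})
          = ∑ b ∈ pbdry N (Mset N m),
              pext N m (0 : Finset (ZMod N) → ℝ) (Mset N m ∆ tr N (Mset N m ∆ {b, b+1}) (-s)) := by
        rw [pbdry_tr]
        rw [show tr N (pbdry N (Mset N m)) (-s) = (pbdry N (Mset N m)).image (· + (-s)) from rfl]
        rw [Finset.sum_image (by intro x _ y _ h; simpa using h)]
        apply Finset.sum_congr rfl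
        intro b _
        have harg : Mset N m ∆ tr N (Mset N m) (-s) ∆ {b + -s, b + -s + 1}
            = Mset N m ∆ tr N (Mset N m ∆ {b, b+1}) (-s) := by
          rw [tr_symmDiff, ← tr_pair b (-s), symmDiff_assoc]
        rw [harg]
      rw [h1, h2, abs_mul, abs_mul, abs_two]
      have h3 : ∀ b, pext N m (0 : Finset (ZMod N) → ℝ) (Mset N m ∆ tr N (Mset N m ∆ {b, b+1}) (-s))
          = if Mset N m ∆ tr N (Mset N m ∆ {b, b+1}) (-s) = ∅ then (1:ℝ) else 0 := fun b =>
        pext_zero _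
      rw [Finset.sum_congr rfl (fun b _ => h3 b)]
      apply mul_le_mul_of_nonneg_left _ (by positivity)
      refine le_trans (Finset.abs_sum_le_sum_abs _ _) (le_of_eq ?_)
      apply Finset.sum_congr rfl
      intro b _
      split_ifs <;> simp
    calc ∑ s : ZMod N, |(dropF N m ε 0).1 s|
        ≤ ∑ s : ZMod N, 2 * |ε| * ∑ b ∈ pbdry N (Mset N m),
            (if Mset N m ∆ tr N (Mset N m ∆ {b, b+1}) (-s) = ∅ then (1:ℝ) else 0) :=
          Finset.sum_le_sum fun s _ => hper s
      _ = 2 * |ε| * ∑ b ∈ pbdry N (Mset N m), ∑ s : ZMod N,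
            (if Mset N m ∆ tr N (Mset N m ∆ {b, b+1}) s = ∅ then (1:ℝ) else 0) := by
          rw [← Finset.mul_sum, Finset.sum_comm]
          congr 1
          apply Finset.sum_congr rfl
          intro b _
          exact Fintype.sum_equiv (Equiv.neg (ZMod N)) _ _ (fun s => rfl)
      _ ≤ 2 * |ε| * ∑ b ∈ pbdry N (Mset N m), (1:ℝ) := by
          apply mul_le_mul_of_nonneg_left _ (by positivity)
          apply Finset.sum_le_sum
          intro b _
          have heq : ∀ s : ZMod N, (Mset N m ∆ tr N (Mset N m ∆ {b, b+1}) s = ∅)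
              ↔ (tr N (Mset N m ∆ {b, b+1}) s = Mset N m) := by
            intro s
            rw [sd_empty_iff]
            exact eq_comm
          rw [Finset.sum_congr rfl (fun s _ => by rw [if_congr (heq s) rfl rfl])]
          rw [Finset.sum_boole]
          exact fiber_M_le_one hm2 hmN _
      _ ≤ 4 * |ε| := by
          rw [Finset.sum_const, nsmul_eq_mul, mul_one]
          have hc : ((pbdry N (Mset N m)).card : ℝ) ≤ 2 := by
            exact_mod_cast pbdry_Mset_card_le hm2 hmN
          nlinarith [abs_nonneg ε]
  -- second component
  have partB : 2 * ∑ X ∈ psector N m, ((nX N m X : ℝ) - 2) * |(dropF N m ε 0).2 X| ≤ 4 * |ε| := by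
    have hperX : ∀ X ∈ psector N m, ((nX N m X : ℝ) - 2) * |(dropF N m ε 0).2 X|
        ≤ |ε| * ∑ j ∈ pbdry N (X ∆ Mset N m), (if X = {j, j+1} then (1:ℝ) else 0) := by
      intro X hX
      obtain ⟨hc, hn⟩ := mem_psector.1 hX
      have hpos : (1:ℝ) ≤ (nX N m X : ℝ) - 2 := nX_pos_real hX
      have hcond : (X ∆ Mset N m).card = m ∧ 2 < nX N m X := ⟨hc, hn⟩
      have hF : (dropF N m ε 0).2 X = -(ε / ((nX N m X : ℝ) - 2)) *
            (∑ j ∈ pbdry N (X ∆ Mset N m),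
              pext N m (0 : Finset (ZMod N) → ℝ) (X ∆ {j, j + 1})) := by
        show (if _ then _ else _) = _
        rw [if_pos hcond]
        have hz : ∀ s : ZMod N, ((0 : (ZMod N → ℝ) × (Finset (ZMod N) → ℝ)).1 s) *
            pext N m (0 : (ZMod N → ℝ) × (Finset (ZMod N) → ℝ)).2
              (tr N X s ∆ tr N (Mset N m) s ∆ Mset N m) = 0 := by
          intro s
          show (0:ℝ) * _ = 0
          rw [zero_mul]
        rw [Finset.sum_congr rfl (fun s _ => hz s), Finset.sum_const, smul_zero, mul_zero, add_zero]
        rfl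
      rw [hF]
      set n2 : ℝ := (nX N m X : ℝ) - 2
      have hn2pos : (0:ℝ) < n2 := by linarith
      rw [abs_mul, abs_neg, abs_div, abs_of_pos hn2pos]
      have : n2 * (|ε| / n2 * |∑ j ∈ pbdry N (X ∆ Mset N m),
          pext N m (0 : Finset (ZMod N) → ℝ) (X ∆ {j, j + 1})|)
          = |ε| * |∑ j ∈ pbdry N (X ∆ Mset N m),
              pext N m (0 : Finset (ZMod N) → ℝ) (X ∆ {j, j + 1})| := by
        field_simp
      rw [this]
      apply mul_le_mul_of_nonneg_left _ (abs_nonneg ε)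
      refine le_trans (Finset.abs_sum_le_sum_abs _ _) (le_of_eq ?_)
      apply Finset.sum_congr rfl
      intro j _
      rw [pext_zero]
      have hiff : (X ∆ {j, j+1} = ∅) ↔ (X = {j, j+1}) := sd_empty_iff X {j, j+1}
      rw [if_congr hiff rfl rfl]
      split_ifs <;> simp
    have key : ∑ X ∈ psector N m, ∑ j ∈ pbdry N (X ∆ Mset N m),
        (if X = {j, j+1} then (1:ℝ) else 0) ≤ 2 := by
      have step1 : ∀ X ∈ psector N m, ∑ j ∈ pbdry N (X ∆ Mset N m),
          (if X = {j, j+1} then (1:ℝ) else 0)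
          ≤ ∑ j ∈ pbdry N (Mset N m), (if X = {j, j+1} then (1:ℝ) else 0) := by
        intro X hX
        rw [← Finset.sum_filter_ne_zero]
        apply Finset.sum_le_sum_of_subset_of_nonneg
        · intro j hj
          rw [Finset.mem_filter] at hj
          have hXj : X = {j, j+1} := by
            by_contra hne
            exact hj.2 (by rw [if_neg hne])
          exact pair_pbdry_M hm2 hmN hX hXj
        · intro j _ _
          split_ifs <;> norm_num
      calc ∑ X ∈ psector N m, ∑ j ∈ pbdry N (X ∆ Mset N m),
            (if X = {j, j+1} then (1:ℝ) else 0)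
          ≤ ∑ X ∈ psector N m, ∑ j ∈ pbdry N (Mset N m),
            (if X = {j, j+1} then (1:ℝ) else 0) := Finset.sum_le_sum step1
        _ = ∑ j ∈ pbdry N (Mset N m), ∑ X ∈ psector N m,
            (if X = {j, j+1} then (1:ℝ) else 0) := Finset.sum_comm
        _ ≤ ∑ j ∈ pbdry N (Mset N m), (1:ℝ) := by
            apply Finset.sum_le_sum
            intro j _
            rw [Finset.sum_ite_eq' (psector N m) ({j, j+1} : Finset (ZMod N)) (fun _ => (1:ℝ))]
            split_ifs <;> norm_num
        _ ≤ 2 := by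
            rw [Finset.sum_const, nsmul_eq_mul, mul_one]
            exact_mod_cast pbdry_Mset_card_le hm2 hmN
    calc 2 * ∑ X ∈ psector N m, ((nX N m X : ℝ) - 2) * |(dropF N m ε 0).2 X|
        ≤ 2 * ∑ X ∈ psector N m, (|ε| * ∑ j ∈ pbdry N (X ∆ Mset N m),
            (if X = {j, j+1} then (1:ℝ) else 0)) := by
          have := Finset.sum_le_sum hperX
          linarith
      _ = 2 * |ε| * ∑ X ∈ psector N m, ∑ j ∈ pbdry N (X ∆ Mset N m),
            (if X = {j, j+1} then (1:ℝ) else 0) := by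
          rw [← Finset.mul_sum]
          ring
      _ ≤ 2 * |ε| * 2 := by
          apply mul_le_mul_of_nonneg_left key (by positivity)
      _ = 4 * |ε| := by ring
  unfold pnorm
  linarith

include hm2 hmN in
lemma pext_congr (u v : Finset (ZMod N) → ℝ) (h : ∀ X ∈ psector N m, u X = v X)
    (Y : Finset (ZMod N)) (hY : (Y ∆ Mset N m).card = m) :
    pext N m u Y = pext N m v Y := by
  rw [pext_eq hm2 hmN u Y hY, pext_eq hm2 hmN v Y hY]
  by_cases hs : Y ∈ psector N m
  · rw [if_pos hs, if_pos hs, h Y hs]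
  · rw [if_neg hs, if_neg hs]

include hm2 hmN in
lemma dropF_congr (ε : ℝ) (p q : (ZMod N → ℝ) × (Finset (ZMod N) → ℝ))
    (h1 : p.1 = q.1) (h2 : ∀ X ∈ psector N m, p.2 X = q.2 X) :
    dropF N m ε p = dropF N m ε q := by
  have hMcard : (Mset N m).card = m := card_Mset hmN
  unfold dropF
  refine Prod.ext ?_ ?_
  · funext s
    simp only
    congr 1
    apply Finset.sum_congr rfl
    intro j hj
    apply pext_congr hm2 hmN p.2 q.2 h2
    have hsd : (Mset N m ∆ tr N (Mset N m) (-s) ∆ {j, j+1}) ∆ Mset N m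
        = tr N (Mset N m) (-s) ∆ {j, j+1} := by
      rw [sd_rotate _ _ (Mset N m), sd_rotate (Mset N m) (tr N (Mset N m) (-s)) (Mset N m),
        symmDiff_self, bot_symmDiff]
    rw [hsd, toggle_card hmN (mem_pbdry.1 hj), tr_card, hMcard]
  · funext X
    simp only
    by_cases hcond : (X ∆ Mset N m).card = m ∧ 2 < nX N m X
    · rw [if_pos hcond, if_pos hcond]
      congr 1
      · congr 1
        apply Finset.sum_congr rfl
        intro j hj
        apply pext_congr hm2 hmN p.2 q.2 h2
        rw [sd_rotate, toggle_card hmN (mem_pbdry.1 hj), hcond.1]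
      · congr 1
        apply Finset.sum_congr rfl
        intro s _
        rw [h1]
        congr 1
        apply pext_congr hm2 hmN p.2 q.2 h2
        rw [quad_card, hcond.1]
    · rw [if_neg hcond, if_neg hcond]

end Chunk6
section Chunk7
variable {N m : ℕ} [NeZero N] (hm2 : 2 ≤ m) (hmN : m + 2 ≤ N)

lemma dropF_snd_off (ε : ℝ) (p : (ZMod N → ℝ) × (Finset (ZMod N) → ℝ))
    {X : Finset (ZMod N)} (h : X ∉ psector N m) : (dropF N m ε p).2 X = 0 := by
  unfold dropF
  exact if_neg fun hc => h (mem_psector.2 hc)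

lemma continuous_pext (Y : Finset (ZMod N)) :
    Continuous (fun e : Finset (ZMod N) → ℝ => pext N m e Y) := by
  unfold pext
  by_cases h1 : Y = ∅
  · simp only [if_pos h1]; exact continuous_const
  · simp only [if_neg h1]
    by_cases h2 : ∃ s, Y = Mset N m ∆ tr N (Mset N m) s
    · simp only [if_pos h2]; exact continuous_const
    · simp only [if_neg h2]; exact continuous_apply Y

lemma continuous_dropF (ε : ℝ) : Continuous (dropF N m ε) := by
  unfold dropF
  refine Continuous.prodMk ?_ ?_
  · apply continuous_pi; intro s
    apply Continuous.mul continuous_const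
    apply continuous_finset_sum
    intro j _
    exact (continuous_pext _).comp continuous_snd
  · apply continuous_pi; intro X
    by_cases hcond : (X ∆ Mset N m).card = m ∧ 2 < nX N m X
    · simp only [if_pos hcond]
      apply Continuous.add
      · exact continuous_const.mul
          (continuous_finset_sum _ fun j _ => (continuous_pext _).comp continuous_snd)
      · apply Continuous.mul continuous_const
        apply continuous_finset_sum
        intro s _
        exact ((continuous_apply s).comp continuous_fst).mul
          ((continuous_pext _).comp continuous_snd)
    · simp only [if_neg hcond]; exact continuous_const

lemma continuous_pnorm : Continuous (pnorm N m) := by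
  unfold pnorm
  apply Continuous.add
  · apply continuous_finset_sum; intro s _
    exact ((continuous_apply s).comp continuous_fst).abs
  · apply Continuous.mul continuous_const
    apply continuous_finset_sum; intro X _
    exact continuous_const.mul (((continuous_apply X).comp continuous_snd).abs)

lemma abs_le_pnorm_fst (x : (ZMod N → ℝ) × (Finset (ZMod N) → ℝ)) (s : ZMod N) :
    |x.1 s| ≤ pnorm N m x := by
  unfold pnorm
  have h1 : |x.1 s| ≤ ∑ t : ZMod N, |x.1 t| :=
    Finset.single_le_sum (f := fun t => |x.1 t|) (fun t _ => abs_nonneg _) (Finset.mem_univ s)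
  have h2 : (0:ℝ) ≤ ∑ X ∈ psector N m, ((nX N m X : ℝ) - 2) * |x.2 X| := by
    apply Finset.sum_nonneg
    intro X hX
    have := nX_pos_real hX
    positivity
  linarith

lemma abs_le_pnorm_snd (x : (ZMod N → ℝ) × (Finset (ZMod N) → ℝ)) {X : Finset (ZMod N)}
    (hX : X ∈ psector N m) : |x.2 X| ≤ pnorm N m x := by
  unfold pnorm
  have h0 : (1:ℝ) ≤ (nX N m X : ℝ) - 2 := nX_pos_real hX
  have h1 : |x.2 X| ≤ ((nX N m X : ℝ) - 2) * |x.2 X| := by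
    nth_rewrite 1 [← one_mul |x.2 X|]
    exact mul_le_mul_of_nonneg_right h0 (abs_nonneg _)
  have h2 : ((nX N m X : ℝ) - 2) * |x.2 X|
      ≤ ∑ Y ∈ psector N m, ((nX N m Y : ℝ) - 2) * |x.2 Y| := by
    apply Finset.single_le_sum _ hX
    intro Y hY
    have := nX_pos_real hY
    positivity
  have h3 : (0:ℝ) ≤ ∑ t : ZMod N, |x.1 t| := Finset.sum_nonneg fun t _ => abs_nonneg _
  have h4 : (0:ℝ) ≤ ∑ Y ∈ psector N m, ((nX N m Y : ℝ) - 2) * |x.2 Y| := by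
    apply Finset.sum_nonneg
    intro Y hY
    have := nX_pos_real hY
    positivity
  linarith

lemma dist_le_pnorm (x y : (ZMod N → ℝ) × (Finset (ZMod N) → ℝ))
    (hx : ∀ X, X ∉ psector N m → x.2 X = 0) (hy : ∀ X, X ∉ psector N m → y.2 X = 0) :
    dist x y ≤ pnorm N m (x - y) := by
  rw [dist_eq_norm, Prod.norm_def]
  apply max_le
  · rw [pi_norm_le_iff_of_nonneg (pnorm_nonneg' _)]
    intro s
    rw [Real.norm_eq_abs]
    have := abs_le_pnorm_fst (N := N) (m := m) (x - y) s
    simpa using this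
  · rw [pi_norm_le_iff_of_nonneg (pnorm_nonneg' _)]
    intro X
    rw [Real.norm_eq_abs]
    by_cases hX : X ∈ psector N m
    · have := abs_le_pnorm_snd (N := N) (m := m) (x - y) hX
      simpa using this
    · have : (x - y).2 X = 0 := by
        simp only [Prod.snd_sub, Pi.sub_apply, hx X hX, hy X hX, sub_zero]
      rw [Prod.snd_sub, Pi.sub_apply] at this ⊢
      rw [this, abs_zero]
      exact pnorm_nonneg' _

include hm2 hmN in
lemma pnorm_sub_parts (x y : (ZMod N → ℝ) × (Finset (ZMod N) → ℝ))
    (h : pnorm N m (x - y) ≤ 0) :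
    x.1 = y.1 ∧ ∀ X ∈ psector N m, x.2 X = y.2 X := by
  rw [pnorm_sub_expand] at h
  have h1nn : (0:ℝ) ≤ ∑ s : ZMod N, |x.1 s - y.1 s| :=
    Finset.sum_nonneg fun s _ => abs_nonneg _
  have h2nn : (0:ℝ) ≤ ∑ X ∈ psector N m, ((nX N m X : ℝ) - 2) * |x.2 X - y.2 X| := by
    apply Finset.sum_nonneg
    intro X hX
    have := nX_pos_real hX
    positivity
  have h1 : ∑ s : ZMod N, |x.1 s - y.1 s| = 0 := le_antisymm (by linarith) h1nn
  have h2 : ∑ X ∈ psector N m, ((nX N m X : ℝ) - 2) * |x.2 X - y.2 X| = 0 :=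
    le_antisymm (by linarith) h2nn
  constructor
  · funext s
    have := (Finset.sum_eq_zero_iff_of_nonneg (fun s _ => abs_nonneg (x.1 s - y.1 s))).1 h1
      s (Finset.mem_univ s)
    have := abs_eq_zero.1 this
    linarith [sub_eq_zero.1 this]
  · intro X hX
    have hz := (Finset.sum_eq_zero_iff_of_nonneg (fun Y hY => by
      have := nX_pos_real hY; positivity)).1 h2 X hX
    have hpos : (0:ℝ) < (nX N m X : ℝ) - 2 := by
      have := nX_pos_real hX; linarith
    rcases mul_eq_zero.1 hz with h | h
    · linarith
    · have := abs_eq_zero.1 h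
      linarith [sub_eq_zero.1 this]

end Chunk7

end AuxDroplet

set_option maxHeartbeats 4000000 in
theorem droplet_fixed_point_exists_unique :
    ∃ δ ε₀ : ℝ, 0 < δ ∧ δ ≤ 1 ∧ 0 < ε₀ ∧
      ∀ (N : ℕ) [NeZero N] (m : ℕ) (ε : ℝ), 4 ≤ N → 2 ≤ m → m + 2 ≤ N → |ε| ≤ ε₀ →
        ∃! p : (ZMod N → ℝ) × (Finset (ZMod N) → ℝ),
          pnorm N m p ≤ δ ∧ dropF N m ε p = p := by
  refine ⟨1/4, 1/100, by norm_num, by norm_num, by norm_num, ?_⟩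
  intro N _ m ε hN4 hm2 hmN hε
  set F := dropF N m ε with hF
  -- contraction estimate on the ball
  have hLip : ∀ p q : (ZMod N → ℝ) × (Finset (ZMod N) → ℝ),
      pnorm N m p ≤ 1/4 → pnorm N m q ≤ 1/4 →
      pnorm N m (F p - F q) ≤ (3/10) * pnorm N m (p - q) := by
    intro p q hp hq
    refine le_trans (lip hm2 hmN ε p q) ?_
    apply mul_le_mul_of_nonneg_right _ (pnorm_nonneg' _)
    have : 5 * |ε| ≤ 5 * (1/100) := by linarith
    linarith
  have hzero : pnorm N m (F (0 : (ZMod N → ℝ) × (Finset (ZMod N) → ℝ))) ≤ 8/100 := by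
    refine le_trans (zero_bound hm2 hmN ε) ?_
    linarith
  have hself : ∀ p : (ZMod N → ℝ) × (Finset (ZMod N) → ℝ),
      pnorm N m p ≤ 1/4 → pnorm N m (F p) ≤ 1/4 := by
    intro p hp
    have h1 : pnorm N m (F p - F 0) ≤ (3/10) * pnorm N m (p - 0) := by
      apply hLip p 0 hp
      rw [pnorm_zero]
      norm_num
    rw [sub_zero] at h1
    have h2 : pnorm N m (F p) ≤ pnorm N m (F p - F 0) + pnorm N m (F 0) := by
      have := pnorm_add_le (N := N) (m := m) (F p - F 0) (F 0)
      rw [sub_add_cancel] at this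
      exact this
    have h3 : (3/10 : ℝ) * pnorm N m p ≤ (3/10) * (1/4) :=
      mul_le_mul_of_nonneg_left hp (by norm_num)
    linarith
  -- iteration sequence
  set seq : ℕ → (ZMod N → ℝ) × (Finset (ZMod N) → ℝ) := fun k => F^[k] 0 with hseq
  have hseq_succ : ∀ k, seq (k + 1) = F (seq k) := by
    intro k
    rw [hseq]
    simp only
    rw [Function.iterate_succ_apply']
  have hball : ∀ k, pnorm N m (seq k) ≤ 1/4 := by
    intro k
    induction k with
    | zero =>
        show pnorm N m 0 ≤ 1/4
        rw [pnorm_zero]; norm_num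
    | succ n ih =>
        rw [hseq_succ]
        exact hself _ ih
  have hgeo : ∀ k, pnorm N m (seq (k + 1) - seq k) ≤ (8/100) * (3/10)^k := by
    intro k
    induction k with
    | zero =>
        have : seq 1 - seq 0 = F 0 := by
          rw [hseq_succ]
          show F (seq 0) - 0 = F 0
          rw [sub_zero]
          rfl
        rw [this]
        
        simpa using hzero
    | succ n ih =>
        have h := hLip (seq (n+1)) (seq n) (hball _) (hball _)
        rw [← hseq_succ, ← hseq_succ] at h
        refine le_trans h ?_
        calc (3/10 : ℝ) * pnorm N m (seq (n + 1) - seq n)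
            ≤ (3/10) * ((8/100) * (3/10)^n) := by
              apply mul_le_mul_of_nonneg_left ih (by norm_num)
          _ = (8/100) * (3/10)^(n+1) := by ring
  have hoff : ∀ k, ∀ X, X ∉ psector N m → (seq k).2 X = 0 := by
    intro k
    induction k with
    | zero => intro X _; rfl
    | succ n ih =>
        intro X hX
        rw [hseq_succ, hF]
        exact dropF_snd_off ε (seq n) hX
  have hcauchy : CauchySeq seq := by
    apply cauchySeq_of_le_geometric (3/10) (8/100) (by norm_num)
    intro n
    rw [dist_comm]
    calc dist (seq (n+1)) (seq n) ≤ pnorm N m (seq (n+1) - seq n) :=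
          dist_le_pnorm _ _ (hoff (n+1)) (hoff n)
      _ ≤ (8/100) * (3/10)^n := hgeo n
  obtain ⟨P, hP⟩ := cauchySeq_tendsto_of_complete hcauchy
  have hfix : F P = P := by
    have h1 : Filter.Tendsto (fun k => seq (k + 1)) Filter.atTop (nhds P) :=
      hP.comp (Filter.tendsto_add_atTop_nat 1)
    have h2 : Filter.Tendsto (fun k => F (seq k)) Filter.atTop (nhds (F P)) :=
      ((continuous_dropF ε).tendsto P).comp hP
    have h3 : (fun k => F (seq k)) = fun k => seq (k + 1) := by
      funext k
      rw [hseq_succ]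
    rw [h3] at h2
    exact tendsto_nhds_unique h2 h1
  have hPnorm : pnorm N m P ≤ 1/4 := by
    have h1 : Filter.Tendsto (fun k => pnorm N m (seq k)) Filter.atTop (nhds (pnorm N m P)) :=
      ((continuous_pnorm (N := N) (m := m)).tendsto P).comp hP
    exact le_of_tendsto h1 (Filter.Eventually.of_forall hball)
  refine ⟨P, ⟨hPnorm, hfix⟩, ?_⟩
  rintro r ⟨hrnorm, hrfix⟩
  have hcontr : pnorm N m (r - P) ≤ (3/10) * pnorm N m (r - P) := by
    have := hLip r P hrnorm hPnorm
    rw [hrfix, hfix] at this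
    exact this
  have hz : pnorm N m (r - P) ≤ 0 := by
    have := pnorm_nonneg' (N := N) (m := m) (r - P)
    linarith
  obtain ⟨h1, h2⟩ := pnorm_sub_parts hm2 hmN r P hz
  have : F r = F P := dropF_congr hm2 hmN ε r P h1 h2
  rw [hrfix, hfix] at this
  exact this
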